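/- Let A and B be types and let E be an equivalence relation on List (A × B) of finite index m. Define the relation E′ on List A by: w E′ w′ iff (a) for every v : List B with v.length = w.length there exists v′ : List B with v′.length = w′.length such that (w.zip v) E (w′.zip v′), and (b) for every v′ : List B with v′.length = w′.length there exists v : List B with v.length = w.length such that (w.zip v) E (w′.zip v′). Then E′ is an equivalence relation on List A of finite index, and the number of its equivalence classes is at most 2^m. (This is the induction step showing that each of the relations ≈ᵢ derived from ≈_{i+1} by quantifying over completions is an equivalence relation of finite index.) -/
import Mathlib


/-- The relation `E′` on `List A` derived from a relation `E` on `List (A × B)` by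
quantifying over completions: `w E′ w′` iff every completion of one side can be matched
by a completion of the other side so that the zipped words are `E`-equivalent. -/
def CompletionRel {A B : Type*} (E : List (A × B) → List (A × B) → Prop)
    (w w' : List A) : Prop :=
  (∀ v : List B, v.length = w.length →
    ∃ v' : List B, v'.length = w'.length ∧ E (w.zip v) (w'.zip v')) ∧
  (∀ v' : List B, v'.length = w'.length →
    ∃ v : List B, v.length = w.length ∧ E (w.zip v) (w'.zip v'))

/-- If `E` is an equivalence relation on `List (A × B)` of finite index `m`,
then the derived relation `E′ = CompletionRel E` on `List A` is an equivalence relation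
of finite index, with at most `2 ^ m` equivalence classes. -/
theorem completionRel_equivalence_finite_index {A B : Type*}
    (E : List (A × B) → List (A × B) → Prop) (hE : Equivalence E) (m : ℕ)
    (hfin : Finite (Quotient (Setoid.mk E hE)))
    (hcard : Nat.card (Quotient (Setoid.mk E hE)) = m) :
    ∃ hE' : Equivalence (CompletionRel E),
      Finite (Quotient (Setoid.mk (CompletionRel E) hE')) ∧
      Nat.card (Quotient (Setoid.mk (CompletionRel E) hE')) ≤ 2 ^ m := by
  classical
  set Q := Quotient (Setoid.mk E hE) with hQ
  set f : List A → Set Q := fun w =>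
    {q | ∃ v : List B, v.length = w.length ∧ q = Quotient.mk _ (w.zip v)} with hf
  have key : ∀ w w', CompletionRel E w w' ↔ f w = f w' := by
    intro w w'
    constructor
    · rintro ⟨h1, h2⟩
      ext q
      constructor
      · rintro ⟨v, hv, rfl⟩
        obtain ⟨v', hv', hvv'⟩ := h1 v hv
        exact ⟨v', hv', Quotient.sound hvv'⟩
      · rintro ⟨v', hv', rfl⟩
        obtain ⟨v, hv, hvv'⟩ := h2 v' hv'
        exact ⟨v, hv, (Quotient.sound hvv').symm⟩
    · intro h
      constructor
      · intro v hv
        have : (Quotient.mk _ (w.zip v) : Q) ∈ f w := ⟨v, hv, rfl⟩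
        rw [h] at this
        obtain ⟨v', hv', heq⟩ := this
        exact ⟨v', hv', Quotient.exact heq⟩
      · intro v' hv'
        have : (Quotient.mk _ (w'.zip v') : Q) ∈ f w' := ⟨v', hv', rfl⟩
        rw [← h] at this
        obtain ⟨v, hv, heq⟩ := this
        exact ⟨v, hv, Quotient.exact heq.symm⟩
  have hE' : Equivalence (CompletionRel E) := by
    constructor
    · intro w; rw [key]
    · intro w w' h; rw [key] at *; exact h.symm
    · intro a b c hab hbc; rw [key] at *; exact hab.trans hbc
  refine ⟨hE', ?_, ?_⟩
  all_goals
    have hinj : Function.Injective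
        (Quotient.lift f (fun a b h => (key a b).mp h) :
          Quotient (Setoid.mk (CompletionRel E) hE') → Set Q) := by
      intro x y
      induction x using Quotient.ind
      induction y using Quotient.ind
      intro h
      exact Quotient.sound ((key _ _).mpr h)
  · exact Finite.of_injective _ hinj
  · calc Nat.card (Quotient (Setoid.mk (CompletionRel E) hE'))
        ≤ Nat.card (Set Q) := Nat.card_le_card_of_injective _ hinj
      _ = 2 ^ m := by
          haveI : Fintype Q := Fintype.ofFinite Q
          rw [Nat.card_eq_fintype_card, Fintype.card_set, ← hcard,
            Nat.card_eq_fintype_card]
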